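/- For every natural number n ≥ 1, the n-th moment satisfies μ_n = (c/n) · ∑_{j=0}^{n−1} binom(n,j)·binom(2n−j−2, n−j−1)·c^j·b^{n−j−1}. -/

import Mathlib

open PowerSeries Finset

noncomputable def tauF (b c : ℝ) : ℕ → ℝ
  | 0 => 0
  | 1 => 1
  | n+2 => c * tauF b c (n+1)
      + b * ∑ k ∈ (Finset.range (n+1)).attach, tauF b c (k.1+1) * tauF b c (n+1-k.1)
termination_by n => n
decreasing_by
  · omega
  · have := Finset.mem_range.mp k.2; omega
  · omega

lemma tauF_zero (b c : ℝ) : tauF b c 0 = 0 := by rw [tauF]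
lemma tauF_one (b c : ℝ) : tauF b c 1 = 1 := by rw [tauF]
lemma tauF_add_two (b c : ℝ) (n : ℕ) :
    tauF b c (n+2) = c * tauF b c (n+1)
      + b * ∑ k ∈ Finset.range (n+1), tauF b c (k+1) * tauF b c (n+1-k) := by
  rw [tauF, ← Finset.sum_attach (Finset.range (n+1)) (fun k => tauF b c (k+1) * tauF b c (n+1-k))]

noncomputable def Tser (b c : ℝ) : ℝ⟦X⟧ := PowerSeries.mk (tauF b c)

lemma hE (b c : ℝ) :
    Tser b c = X + C c * (X * Tser b c) + C b * (Tser b c)^2 := by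
  ext n
  rw [map_add, map_add, coeff_C_mul, coeff_C_mul]
  match n with
  | 0 => simp [Tser, tauF_zero, pow_two, coeff_zero_eq_constantCoeff]
  | 1 =>
      simp only [Tser, coeff_mk, coeff_one_X, pow_two, coeff_succ_X_mul, coeff_zero_eq_constantCoeff]
      rw [PowerSeries.coeff_mul]
      simp [tauF_zero, tauF_one, Finset.Nat.sum_antidiagonal_eq_sum_range_succ_mk, Finset.sum_range_succ]
  | (m+2) =>
      simp only [Tser, coeff_mk, coeff_X, coeff_succ_X_mul, pow_two]
      rw [PowerSeries.coeff_mul, Finset.Nat.sum_antidiagonal_eq_sum_range_succ_mk]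
      simp only [coeff_mk]
      rw [tauF_add_two]
      have h1 : ∑ i ∈ Finset.range (m+2+1), tauF b c (i, m+2-i).1 * tauF b c (i, m+2-i).2
          = ∑ k ∈ Finset.range (m+1), tauF b c (k+1) * tauF b c (m+1-k) := by
        rw [Finset.sum_range_succ, Finset.sum_range_succ']
        have h2 : tauF b c ((m+2:ℕ), m+2-(m+2)).1 * tauF b c ((m+2:ℕ), m+2-(m+2)).2 = 0 := by
          simp only; rw [Nat.sub_self, tauF_zero, mul_zero]
        have h3 : tauF b c ((0:ℕ), m+2-0).1 * tauF b c ((0:ℕ), m+2-0).2 = 0 := by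
          simp only; rw [tauF_zero, zero_mul]
        rw [h2, h3, add_zero, add_zero]
        apply Finset.sum_congr rfl
        intro k hk
        simp only
        congr 2
        omega
      rw [show ((m:ℕ)+2).succ = m+2+1 from rfl, h1]
      simp only [show ¬(m+2 = 1) by omega, if_false]
      ring


noncomputable def Imk (b : ℝ) : ℝ⟦X⟧ := PowerSeries.mk (fun m => b^m)

lemma hI (b : ℝ) : (1 - C b * X) * Imk b = 1 := by
  ext n
  rw [sub_mul, one_mul, map_sub, mul_assoc, coeff_C_mul]
  match n with
  | 0 => simp [Imk, coeff_zero_eq_constantCoeff]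
  | (m+1) => simp [Imk, coeff_succ_X_mul, coeff_mk, pow_succ, mul_comm]

lemma sum_choose_aux (n m : ℕ) :
    ∑ i ∈ Finset.range (m+1), (n+i-1).choose i = (n+m).choose m := by
  induction m with
  | zero => simp
  | succ m ih =>
      rw [Finset.sum_range_succ, ih, show n+(m+1)-1 = n+m by omega]
      rw [show n+(m+1) = (n+m)+1 by omega, Nat.choose_succ_succ' (n+m) m]

lemma coeff_Imk_pow (b : ℝ) (n m : ℕ) :
    (coeff m) ((Imk b)^n) = ((n+m-1).choose m : ℝ) * b^m := by
  induction n generalizing m with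
  | zero =>
      match m with
      | 0 => simp
      | m+1 => simp [coeff_one, Nat.choose_eq_zero_of_lt (show m+1-1 < m+1 by omega)]
  | succ n ih =>
      rw [pow_succ, PowerSeries.coeff_mul, Finset.Nat.sum_antidiagonal_eq_sum_range_succ_mk]
      have : ∀ i ∈ Finset.range (m+1),
          (coeff (i, m-i).1) ((Imk b)^n) * (coeff (i, m-i).2) (Imk b)
          = ((n+i-1).choose i : ℝ) * b^m := by
        intro i hi
        have hi' := Finset.mem_range.mp hi
        show (coeff i) ((Imk b)^n) * (coeff (m-i)) (Imk b) = _
        rw [ih, Imk, coeff_mk, mul_assoc, ← pow_add, show i + (m-i) = m by omega]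
      rw [Finset.sum_congr rfl this, ← Finset.sum_mul]
      norm_cast
      rw [sum_choose_aux n m]
      rw [show n+1+m-1 = n+m by omega]

lemma coeff_onePlus_pow (c : ℝ) (n j : ℕ) (h : j ≤ n) :
    (coeff j) ((1 + C c * X)^n) = (n.choose j : ℝ) * c^j := by
  rw [add_comm (1:ℝ⟦X⟧) _, add_pow, map_sum]
  have hterm : ∀ k, (coeff j) ((C c * X)^k * 1^(n-k) * (n.choose k : ℝ⟦X⟧))
      = if j = k then (n.choose k : ℝ) * c^k else 0 := by
    intro k
    rw [one_pow, mul_one, mul_pow, ← map_pow]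
    rw [show ((n.choose k : ℕ) : ℝ⟦X⟧) = C ((n.choose k : ℕ) : ℝ) from (map_natCast (C (R := ℝ)) _).symm]
    rw [mul_right_comm, ← map_mul, coeff_C_mul, coeff_X_pow]
    by_cases hjk : j = k <;> simp [hjk, mul_comm]
  rw [Finset.sum_congr rfl (fun k _ => hterm k), Finset.sum_ite_eq (Finset.range (n+1)) j]
  simp [Nat.lt_succ_iff.mpr h]

noncomputable def Dn (b c : ℝ) (n : ℕ) : ℝ⟦X⟧ := (1 + C c * X)^n * (Imk b)^n
noncomputable def En (b c : ℝ) (n : ℕ) : ℝ⟦X⟧ := (1 + C c * X)^(n-1) * (Imk b)^(n+1)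

lemma hI' (b : ℝ) : d⁄dX ℝ (Imk b) = C b * (Imk b)^2 := by
  have h0 := congrArg (d⁄dX ℝ) (hI b)
  rw [Derivation.leibniz, Derivation.map_one_eq_zero] at h0
  have h1 : d⁄dX ℝ (1 - C b * X : ℝ⟦X⟧) = - C b := by
    rw [map_sub, Derivation.map_one_eq_zero, Derivation.leibniz]
    simp
  rw [h1] at h0
  have e0 : (1 - C b * X) * d⁄dX ℝ (Imk b) - Imk b * C b = 0 := by
    rw [← h0]; simp [smul_eq_mul]; ring
  linear_combination (Imk b) * e0 - (d⁄dX ℝ (Imk b)) * (hI b)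

lemma hA' (c : ℝ) : d⁄dX ℝ (1 + C c * X : ℝ⟦X⟧) = C c := by
  rw [map_add, Derivation.map_one_eq_zero, Derivation.leibniz]
  simp

lemma e1 (b : ℝ) (m : ℕ) :
    (Imk b)^(m+1) = (1 - C b * X) * (Imk b)^(m+2) := by
  linear_combination (-(Imk b)^(m+1)) * hI b

lemma hD' (b c : ℝ) (m : ℕ) :
    d⁄dX ℝ (Dn b c (m+1)) = C (((m:ℝ)+1)*(b+c)) * En b c (m+1) := by
  rw [Dn, En, Derivation.leibniz, Derivation.leibniz_pow, Derivation.leibniz_pow,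
    hI' b, hA' c]
  simp only [smul_eq_mul, nsmul_eq_mul, Nat.add_sub_cancel]
  push_cast
  rw [show (m+1+1) = m+2 from rfl]
  have := e1 b m
  rw [map_mul, map_add, map_add]
  push_cast
  simp only [map_natCast, map_one]
  linear_combination ((1 + C c * X)^m * C c * ((m:ℝ⟦X⟧)+1)) * e1 b m

lemma coeff_hD' (b c : ℝ) (m j : ℕ) :
    (coeff (j+1) (Dn b c (m+1))) * (j+1) = ((m:ℝ)+1)*(b+c) * coeff j (En b c (m+1)) := by
  have h := congrArg (coeff j) (hD' b c m)
  rw [PowerSeries.coeff_derivative, coeff_C_mul] at h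
  exact_mod_cast h

-- dd and ee
noncomputable def dd (b c : ℝ) (n k : ℕ) : ℝ :=
  if k ≤ n then coeff (n-k) (Dn b c n) else 0
noncomputable def ee (b c : ℝ) (n k : ℕ) : ℝ :=
  if k < n then (b+c) * coeff (n-k-1) (En b c n) else 0

lemma base0 (b c : ℝ) (n : ℕ) (hn : 1 ≤ n) :
    coeff n (Dn b c n) = (b+c) * coeff (n-1) (En b c n) := by
  obtain ⟨m, rfl⟩ : ∃ m, n = m+1 := ⟨n-1, by omega⟩
  have h := coeff_hD' b c m m
  rw [show (m:ℕ)+1-1 = m by omega]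
  have hm : ((m:ℝ)+1) ≠ 0 := by positivity
  field_simp at h ⊢
  nlinarith [h]

lemma base1 (b c : ℝ) (m : ℕ) :
    (coeff (m+1) (Dn b c (m+2))) * ((m:ℝ)+1)
      = ((m:ℝ)+2)*(b+c) * coeff m (En b c (m+2)) := by
  have h := coeff_hD' b c (m+1) m
  push_cast at h ⊢
  linarith [h]

-- order lemmas for T
noncomputable def T1 (b c : ℝ) : ℝ⟦X⟧ := PowerSeries.mk (fun n => tauF b c (n+1))

lemma hT_eq (b c : ℝ) : Tser b c = X * T1 b c := by
  ext n
  match n with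
  | 0 => simp [Tser, T1, tauF_zero, coeff_zero_eq_constantCoeff]
  | m+1 => simp [Tser, T1, coeff_succ_X_mul]

lemma constantCoeff_T1 (b c : ℝ) : constantCoeff (T1 b c) = 1 := by
  simp [T1, ← coeff_zero_eq_constantCoeff, tauF_one]

lemma coeff_T_pow_lt (b c : ℝ) (n k : ℕ) (h : n < k) :
    coeff n ((Tser b c)^k) = 0 := by
  rw [hT_eq, mul_pow, PowerSeries.coeff_X_pow_mul' (T1 b c ^ k) k n, if_neg (by omega)]

lemma coeff_T_pow_self (b c : ℝ) (n : ℕ) :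
    coeff n ((Tser b c)^n) = 1 := by
  rw [hT_eq, mul_pow, PowerSeries.coeff_X_pow_mul' (T1 b c ^ n) n n, if_pos (le_refl n),
    Nat.sub_self, coeff_zero_eq_constantCoeff, map_pow, constantCoeff_T1, one_pow]

-- a recurrence
lemma Ra (b c : ℝ) (n k : ℕ) :
    coeff (n+1) ((Tser b c)^(k+1))
      = b * coeff (n+1) ((Tser b c)^(k+2))
        + coeff n ((Tser b c)^k) + c * coeff n ((Tser b c)^(k+1)) := by
  have hmul : (Tser b c)^(k+1)
      = X * (Tser b c)^k + C c * (X * (Tser b c)^(k+1)) + C b * (Tser b c)^(k+2) := by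
    linear_combination ((Tser b c)^k) * (hE b c)
  conv_lhs => rw [hmul]
  rw [map_add, map_add, coeff_C_mul, coeff_C_mul, coeff_succ_X_mul, coeff_succ_X_mul]
  ring

lemma coeff_one_sub_mul (r : ℝ) (S : ℝ⟦X⟧) (j : ℕ) :
    coeff (j+1) ((1 - C r * X) * S) = coeff (j+1) S - r * coeff j S := by
  rw [sub_mul, one_mul, map_sub, mul_assoc, coeff_C_mul, coeff_succ_X_mul]

lemma coeff_one_add_mul (r : ℝ) (S : ℝ⟦X⟧) (j : ℕ) :
    coeff (j+1) ((1 + C r * X) * S) = coeff (j+1) S + r * coeff j S := by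
  rw [add_mul, one_mul, map_add, mul_assoc, coeff_C_mul, coeff_succ_X_mul]

lemma Sd (b c : ℝ) (m : ℕ) :
    (1 - C b * X) * Dn b c (m+1) = (1 + C c * X) * Dn b c m := by
  rw [Dn, Dn]
  linear_combination ((1 + C c * X)^(m+1) * (Imk b)^m) * hI b

lemma Se (b c : ℝ) (m : ℕ) :
    (1 - C b * X) * En b c (m+2) = (1 + C c * X) * En b c (m+1) := by
  rw [En, En, show m+2-1 = m+1 by omega, show m+1-1 = m by omega]
  linear_combination ((1 + C c * X)^(m+1) * (Imk b)^(m+2)) * hI b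

lemma coeff0_Dn (b c : ℝ) (n : ℕ) : coeff 0 (Dn b c n) = 1 := by
  rw [coeff_zero_eq_constantCoeff, Dn, map_mul, map_pow, map_pow]
  simp [Imk, constantCoeff_mk]

lemma coeff0_En (b c : ℝ) (n : ℕ) : coeff 0 (En b c n) = 1 := by
  rw [coeff_zero_eq_constantCoeff, En, map_mul, map_pow, map_pow]
  simp [Imk, constantCoeff_mk]

lemma Rd (b c : ℝ) (m k : ℕ) (hk1 : 1 ≤ k) (hk2 : k ≤ m) :
    dd b c (m+1) k = b * dd b c (m+1) (k+1) + dd b c m (k-1) + c * dd b c m k := by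
  have h := congrArg (coeff ((m-k)+1)) (Sd b c m)
  rw [coeff_one_sub_mul, coeff_one_add_mul] at h
  unfold dd
  rw [if_pos (by omega : k ≤ m+1), if_pos (by omega : k+1 ≤ m+1),
    if_pos (by omega : k-1 ≤ m), if_pos (by omega : k ≤ m)]
  rw [show m+1-k = (m-k)+1 by omega, show m+1-(k+1) = m-k by omega,
    show m-(k-1) = (m-k)+1 by omega]
  linarith [h]

lemma Re (b c : ℝ) (m k : ℕ) (hk1 : 1 ≤ k) (hk2 : k ≤ m) :
    ee b c (m+2) k = b * ee b c (m+2) (k+1) + ee b c (m+1) (k-1) + c * ee b c (m+1) k := by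
  have h := congrArg (coeff ((m-k)+1)) (Se b c m)
  rw [coeff_one_sub_mul, coeff_one_add_mul] at h
  unfold ee
  rw [if_pos (by omega : k < m+2), if_pos (by omega : k+1 < m+2),
    if_pos (by omega : k-1 < m+1), if_pos (by omega : k < m+1)]
  rw [show m+2-k-1 = (m-k)+1 by omega, show m+2-(k+1)-1 = m-k by omega,
    show m+1-(k-1)-1 = (m-k)+1 by omega, show m+1-k-1 = m-k by omega]
  linear_combination (b+c) * h

lemma Re_edge (b c : ℝ) (m : ℕ) :
    ee b c (m+2) (m+1) = b * ee b c (m+2) (m+2) + ee b c (m+1) m + c * ee b c (m+1) (m+1) := by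
  unfold ee
  rw [if_pos (by omega : m+1 < m+2), if_neg (by omega : ¬(m+2 < m+2)),
    if_pos (by omega : m < m+1), if_neg (by omega : ¬(m+1 < m+1))]
  rw [show m+2-(m+1)-1 = 0 by omega, show m+1-m-1 = 0 by omega, coeff0_En, coeff0_En]
  ring

lemma main_ade (b c : ℝ) : ∀ m n k, 2*n ≤ m + k →
    coeff n ((Tser b c)^k) = dd b c n k - ee b c n k := by
  intro m
  induction m with
  | zero =>
      intro n k h
      rcases Nat.lt_or_ge n k with hnk | hnk
      · rw [coeff_T_pow_lt b c n k hnk, dd, ee, if_neg (by omega), if_neg (by omega)]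
        ring
      · have : n = k := by omega
        subst this
        rw [coeff_T_pow_self, dd, ee, if_pos (le_refl n), if_neg (by omega), Nat.sub_self,
          coeff0_Dn]
        ring
  | succ m ih =>
      intro n k h
      rcases Nat.lt_or_ge n k with hnk | hnk
      · rw [coeff_T_pow_lt b c n k hnk, dd, ee, if_neg (by omega), if_neg (by omega)]
        ring
      rcases Nat.eq_or_lt_of_le hnk with hnk' | hnk'
      · subst hnk'
        rw [coeff_T_pow_self, dd, ee, if_pos le_rfl, if_neg (lt_irrefl _), Nat.sub_self,
          coeff0_Dn]
        ring
      -- now k < n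
      match k, n, hnk' with
      | 0, n+1, _ =>
          rw [pow_zero, coeff_one, if_neg (Nat.succ_ne_zero n), dd, ee,
            if_pos (Nat.zero_le (n+1)), if_pos (Nat.succ_pos n)]
          simp only [Nat.sub_zero]
          rw [base0 b c (n+1) (Nat.succ_le_succ (Nat.zero_le n))]
          ring
      | k+1, n+1, hlt =>
          have hkn : k + 1 ≤ n := by omega
          rw [Ra b c n k]
          have h1 : coeff (n+1) ((Tser b c)^(k+2)) = dd b c (n+1) (k+2) - ee b c (n+1) (k+2) := by
            apply ih; omega
          have h2 : coeff n ((Tser b c)^k) = dd b c n k - ee b c n k := by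
            apply ih; omega
          have h3 : coeff n ((Tser b c)^(k+1)) = dd b c n (k+1) - ee b c n (k+1) := by
            apply ih; omega
          rw [h1, h2, h3]
          have hd := Rd b c n (k+1) (by omega) hkn
          rw [show k+1-1 = k by omega] at hd
          obtain ⟨p, rfl⟩ : ∃ p, n = p+1 := ⟨n-1, by omega⟩
          rcases Nat.eq_or_lt_of_le hkn with he | he
          · -- k+1 = p+1, i.e. k = p
            have hk' : k = p := by omega
            subst hk'
            rw [hd, Re_edge b c k]
            ring
          · -- k+1 ≤ p
            have hee := Re b c p (k+1) (by omega) (by omega)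
            rw [show k+1-1 = k by omega] at hee
            rw [hd, hee]
            ring

lemma tau_closed (b c : ℝ) (n : ℕ) (hn : 1 ≤ n) :
    (n:ℝ) * tauF b c n = coeff (n-1) (Dn b c n) := by
  have ha : coeff n ((Tser b c)^1) = dd b c n 1 - ee b c n 1 :=
    main_ade b c (2*n) n 1 (by omega)
  rw [pow_one, Tser, coeff_mk] at ha
  rw [dd, if_pos hn] at ha
  match n, hn with
  | 1, _ =>
      rw [ee, if_neg (lt_irrefl 1)] at ha
      push_cast
      linarith [ha]
  | (m+2), _ =>
      rw [ee, if_pos (by omega : 1 < m+2)] at ha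
      have hb := base1 b c m
      rw [show m+2-1 = m+1 by omega] at ha ⊢
      rw [show m+1-1 = m by omega] at ha
      push_cast at ha hb ⊢
      nlinarith [ha, hb]

lemma sum_form (b c : ℝ) (n : ℕ) (hn : 1 ≤ n) :
    coeff (n-1) (Dn b c n)
      = ∑ j ∈ Finset.range n,
          (n.choose j : ℝ) * ((2 * n - j - 2).choose (n - j - 1) : ℝ) * c ^ j * b ^ (n - j - 1) := by
  rw [Dn, PowerSeries.coeff_mul, Finset.Nat.sum_antidiagonal_eq_sum_range_succ_mk,
    show (n-1).succ = n by omega]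
  apply Finset.sum_congr rfl
  intro j hj
  have hj' := Finset.mem_range.mp hj
  show (coeff j) ((1 + C c * X)^n) * (coeff (n-1-j)) ((Imk b)^n) = _
  rw [coeff_onePlus_pow c n j (by omega), coeff_Imk_pow b n (n-1-j)]
  rw [show n+(n-1-j)-1 = 2*n-j-2 by omega, show n-1-j = n-j-1 by omega]
  ring

-- Part A : orthogonality and uniqueness
noncomputable def Fser (b c : ℝ) : ℝ⟦X⟧ := 1 + C c * Tser b c
noncomputable def nuF (b c : ℝ) (k : ℕ) : ℝ := coeff k (Fser b c)
noncomputable def Lam (b c : ℝ) (p : Polynomial ℝ) : ℝ := p.sum fun k a => a * nuF b c k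

lemma nuF_zero (b c : ℝ) : nuF b c 0 = 1 := by
  simp [nuF, Fser, ← coeff_zero_eq_constantCoeff, Tser, tauF_zero]

lemma nuF_pos (b c : ℝ) (k : ℕ) : nuF b c (k+1) = c * tauF b c (k+1) := by
  simp [nuF, Fser, coeff_C_mul, Tser, coeff_one]

lemma Lam_add (b c : ℝ) (p q : Polynomial ℝ) : Lam b c (p + q) = Lam b c p + Lam b c q := by
  unfold Lam
  apply Polynomial.sum_add_index <;> intros <;> ring

lemma Lam_monomial (b c : ℝ) (i : ℕ) (r : ℝ) :
    Lam b c (Polynomial.monomial i r) = r * nuF b c i := by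
  unfold Lam
  apply Polynomial.sum_monomial_index
  ring

lemma Lam_smul (b c : ℝ) (r : ℝ) (p : Polynomial ℝ) : Lam b c (r • p) = r * Lam b c p := by
  unfold Lam
  rw [Polynomial.sum_smul_index (p := p) (b := r) (f := fun k a => a * nuF b c k)
    (fun i => by ring)]
  rw [Polynomial.sum_def, Polynomial.sum_def, Finset.mul_sum]
  apply Finset.sum_congr rfl
  intros; ring

lemma Lam_sum (b c : ℝ) {ι : Type*} (s : Finset ι) (f : ι → Polynomial ℝ) :
    Lam b c (∑ i ∈ s, f i) = ∑ i ∈ s, Lam b c (f i) := by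
  classical
  induction s using Finset.induction with
  | empty => simp [Lam, Polynomial.sum_zero_index]
  | insert _ _ hnot ih =>
      rw [Finset.sum_insert hnot, Finset.sum_insert hnot, Lam_add, ih]

lemma Lam_range (b c : ℝ) (p : Polynomial ℝ) (N : ℕ) (h : p.natDegree < N) :
    Lam b c p = ∑ k ∈ Finset.range N, p.coeff k * nuF b c k := by
  unfold Lam
  exact Polynomial.sum_over_range' p (fun i => by ring) N h

lemma geom_series {R : Type*} [CommRing R] (r : R) :
    (1 - C r * X) * PowerSeries.mk (fun m => r^m) = 1 := by
  ext n
  rw [sub_mul, one_mul, map_sub, mul_assoc, coeff_C_mul]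
  match n with
  | 0 => simp [coeff_zero_eq_constantCoeff]
  | m+1 => simp [coeff_succ_X_mul, coeff_mk, pow_succ, mul_comm]

noncomputable def Zmk (b c : ℝ) (P : ℕ → Polynomial ℝ) : PowerSeries (Polynomial ℝ) :=
  PowerSeries.mk fun N => ∑ n ∈ Finset.range (N+1), (coeff N ((Tser b c)^n)) • P n

lemma mulshift (b c : ℝ) (P : ℕ → Polynomial ℝ) (S : ℝ⟦X⟧) :
    PowerSeries.map (Polynomial.C (R := ℝ)) S * Zmk b c P
      = PowerSeries.mk fun N =>
          ∑ n ∈ Finset.range (N+1), (coeff N (S * (Tser b c)^n)) • P n := by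
  refine PowerSeries.ext fun N => ?_
  rw [PowerSeries.coeff_mul, PowerSeries.coeff_mk]
  have step1 : ∀ p ∈ Finset.HasAntidiagonal.antidiagonal N,
      (coeff p.1) (PowerSeries.map (Polynomial.C (R := ℝ)) S) * (coeff p.2) (Zmk b c P)
      = ∑ n ∈ Finset.range (N+1), (coeff p.1 S * coeff p.2 ((Tser b c)^n)) • P n := by
    intro p hp
    have hple : p.2 ≤ N := by
      have := Finset.HasAntidiagonal.mem_antidiagonal.mp hp; omega
    rw [PowerSeries.coeff_map, Zmk, PowerSeries.coeff_mk]
    have hext : ∑ n ∈ Finset.range (p.2+1), (coeff p.2 ((Tser b c)^n)) • P n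
        = ∑ n ∈ Finset.range (N+1), (coeff p.2 ((Tser b c)^n)) • P n := by
      apply Finset.sum_subset (Finset.range_subset_range.mpr (by omega))
      intro x hx hnx
      have hgt : p.2 < x := by
        by_contra hcon
        exact hnx (Finset.mem_range.mpr (by omega))
      rw [coeff_T_pow_lt b c p.2 x hgt, zero_smul]
    rw [hext, Finset.mul_sum]
    apply Finset.sum_congr rfl
    intro n _
    rw [← Polynomial.smul_eq_C_mul, smul_smul]
  rw [Finset.sum_congr rfl step1, Finset.sum_comm]
  apply Finset.sum_congr rfl
  intro n _
  rw [← Finset.sum_smul, ← PowerSeries.coeff_mul]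

lemma Zrec (b c : ℝ) (P : ℕ → Polynomial ℝ)
    (hP0 : P 0 = 1) (hP1 : P 1 = Polynomial.X - Polynomial.C c)
    (hP : ∀ n, P (n+2)
      = (Polynomial.X - Polynomial.C c) * P (n+1) - Polynomial.C b * Polynomial.X * P n) :
    (1 - PowerSeries.C (Polynomial.X - Polynomial.C c)
          * PowerSeries.map (Polynomial.C (R := ℝ)) (Tser b c)
       + PowerSeries.C (Polynomial.C b * Polynomial.X)
          * (PowerSeries.map (Polynomial.C (R := ℝ)) (Tser b c))^2)
      * Zmk b c P = 1 := by
  set q1 : Polynomial ℝ := Polynomial.X - Polynomial.C c with hq1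
  set q2 : Polynomial ℝ := Polynomial.C b * Polynomial.X with hq2
  have hmap2 : (PowerSeries.map (Polynomial.C (R := ℝ)) (Tser b c))^2
      = PowerSeries.map (Polynomial.C (R := ℝ)) ((Tser b c)^2) := by
    rw [map_pow]
  rw [hmap2, add_mul, sub_mul, one_mul, mul_assoc, mul_assoc, mulshift, mulshift]
  refine PowerSeries.ext fun N => ?_
  rw [map_add, map_sub, coeff_C_mul, coeff_C_mul, PowerSeries.coeff_mk, PowerSeries.coeff_mk,
    Zmk, PowerSeries.coeff_mk]
  have hS1 : ∀ n, Tser b c * (Tser b c)^n = (Tser b c)^(n+1) := fun n => (pow_succ' _ _).symm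
  have hS2 : ∀ n, (Tser b c)^2 * (Tser b c)^n = (Tser b c)^(n+2) := by
    intro n; rw [← pow_add]; ring_nf
  simp only [hS1, hS2]
  match N with
  | 0 =>
      simp only [zero_add, Finset.range_one, Finset.sum_singleton, pow_zero, pow_one]
      rw [hP0, coeff_zero_eq_constantCoeff]
      simp [Tser, tauF_zero, constantCoeff_mk, coeff_one]
  | M+1 =>
      -- LHS main sum
      rw [Finset.sum_range_succ' (fun n => (coeff (M+1) ((Tser b c)^n)) • P n) (M+1)]
      rw [pow_zero, coeff_one, if_neg (Nat.succ_ne_zero M), zero_smul, add_zero]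
      have hsplit : ∀ i ∈ Finset.range (M+1),
          (coeff (M+1) ((Tser b c)^(i+1))) • P (i+1)
          = q1 * ((coeff (M+1) ((Tser b c)^(i+1))) • P i)
            - q2 * ((coeff (M+1) ((Tser b c)^(i+1))) • (if i = 0 then 0 else P (i-1))) := by
        intro i _
        match i with
        | 0 =>
            rw [hP1, hP0, if_pos rfl, smul_zero, mul_zero, sub_zero,
              Polynomial.smul_eq_C_mul, Polynomial.smul_eq_C_mul]
            ring
        | j+1 =>
            rw [hP j, if_neg (Nat.succ_ne_zero j), show j+1-1 = j from rfl]
            rw [Polynomial.smul_eq_C_mul, Polynomial.smul_eq_C_mul, Polynomial.smul_eq_C_mul]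
            ring
      rw [Finset.sum_congr rfl hsplit, Finset.sum_sub_distrib, ← Finset.mul_sum, ← Finset.mul_sum]
      -- first sum: extend to range (M+2)
      have hfirst : ∑ i ∈ Finset.range (M+1), (coeff (M+1) ((Tser b c)^(i+1))) • P i
          = ∑ n ∈ Finset.range (M+1+1), (coeff (M+1) ((Tser b c)^(n+1))) • P n := by
        conv_rhs => rw [Finset.sum_range_succ]
        rw [coeff_T_pow_lt b c (M+1) (M+1+1) (by omega), zero_smul, add_zero]
      -- second sum
      have hsecond : ∑ i ∈ Finset.range (M+1),
            (coeff (M+1) ((Tser b c)^(i+1))) • (if i = 0 then 0 else P (i-1))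
          = ∑ n ∈ Finset.range (M+1+1), (coeff (M+1) ((Tser b c)^(n+2))) • P n := by
        rw [Finset.sum_range_succ' (fun i => (coeff (M+1) ((Tser b c)^(i+1))) • (if i = 0 then 0 else P (i-1))) M]
        rw [if_pos rfl, smul_zero, add_zero]
        have : ∀ j ∈ Finset.range M,
            (coeff (M+1) ((Tser b c)^(j+1+1))) • (if j+1 = 0 then 0 else P (j+1-1))
            = (coeff (M+1) ((Tser b c)^(j+2))) • P j := by
          intro j _
          rw [if_neg (Nat.succ_ne_zero j), show j+1-1 = j from rfl]
        rw [Finset.sum_congr rfl this]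
        conv_rhs => rw [Finset.sum_range_succ, Finset.sum_range_succ]
        rw [coeff_T_pow_lt b c (M+1) (M+1+2) (by omega),
          coeff_T_pow_lt b c (M+1) (M+2) (by omega), zero_smul, zero_smul, add_zero, add_zero]
      rw [hfirst, hsecond, PowerSeries.coeff_one, if_neg (Nat.succ_ne_zero M)]
      ring

noncomputable def Gser (b c : ℝ) : ℝ⟦X⟧ := (Fser b c)⁻¹

lemma hFG (b c : ℝ) : Fser b c * Gser b c = 1 := by
  apply PowerSeries.mul_inv_cancel
  rw [Fser, map_add, map_one, map_mul, constantCoeff_C]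
  rw [show constantCoeff (Tser b c) = 0 by simp [Tser, constantCoeff_mk, tauF_zero]]
  norm_num

lemma hfac (b c : ℝ) :
    (1 : PowerSeries (Polynomial ℝ))
      - PowerSeries.C (Polynomial.X - Polynomial.C c)
          * PowerSeries.map (Polynomial.C (R := ℝ)) (Tser b c)
      + PowerSeries.C (Polynomial.C b * Polynomial.X)
          * (PowerSeries.map (Polynomial.C (R := ℝ)) (Tser b c))^2
    = PowerSeries.map (Polynomial.C (R := ℝ)) (Fser b c)
        * (1 - PowerSeries.C Polynomial.X * X) := by
  have hEm := congrArg (PowerSeries.map (Polynomial.C (R := ℝ))) (hE b c)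
  simp only [map_add, map_mul, PowerSeries.map_X, PowerSeries.map_C, map_pow] at hEm
  rw [Fser]
  simp only [map_add, map_one, map_mul, PowerSeries.map_C,
    map_sub (PowerSeries.C (R := Polynomial ℝ))]
  linear_combination (-(PowerSeries.C Polynomial.X)) * hEm

noncomputable def Ymk (b c : ℝ) : PowerSeries (Polynomial ℝ) :=
  PowerSeries.mk (fun j => (Polynomial.X : Polynomial ℝ)^j)
    * PowerSeries.map (Polynomial.C (R := ℝ)) (Gser b c)

lemma hZY (b c : ℝ) (P : ℕ → Polynomial ℝ)
    (hP0 : P 0 = 1) (hP1 : P 1 = Polynomial.X - Polynomial.C c)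
    (hP : ∀ n, P (n+2)
      = (Polynomial.X - Polynomial.C c) * P (n+1) - Polynomial.C b * Polynomial.X * P n) :
    Zmk b c P = Ymk b c := by
  set A : PowerSeries (Polynomial ℝ) :=
    (1 : PowerSeries (Polynomial ℝ))
      - PowerSeries.C (Polynomial.X - Polynomial.C c)
          * PowerSeries.map (Polynomial.C (R := ℝ)) (Tser b c)
      + PowerSeries.C (Polynomial.C b * Polynomial.X)
          * (PowerSeries.map (Polynomial.C (R := ℝ)) (Tser b c))^2 with hA
  have hAZ : A * Zmk b c P = 1 := Zrec b c P hP0 hP1 hP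
  have hAY : A * Ymk b c = 1 := by
    rw [hA, hfac, Ymk]
    calc PowerSeries.map (Polynomial.C (R := ℝ)) (Fser b c)
          * (1 - PowerSeries.C Polynomial.X * X)
          * (PowerSeries.mk (fun j => (Polynomial.X : Polynomial ℝ)^j)
              * PowerSeries.map (Polynomial.C (R := ℝ)) (Gser b c))
        = (PowerSeries.map (Polynomial.C (R := ℝ)) (Fser b c)
            * PowerSeries.map (Polynomial.C (R := ℝ)) (Gser b c))
          * ((1 - PowerSeries.C Polynomial.X * X)
              * PowerSeries.mk (fun j => (Polynomial.X : Polynomial ℝ)^j)) := by ring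
      _ = 1 := by
          rw [← map_mul, hFG, map_one, geom_series, one_mul]
  calc Zmk b c P = (A * Ymk b c) * Zmk b c P := by rw [hAY, one_mul]
    _ = (A * Zmk b c P) * Ymk b c := by ring
    _ = Ymk b c := by rw [hAZ, one_mul]

lemma keyN (b c : ℝ) (P : ℕ → Polynomial ℝ)
    (hP0 : P 0 = 1) (hP1 : P 1 = Polynomial.X - Polynomial.C c)
    (hP : ∀ n, P (n+2)
      = (Polynomial.X - Polynomial.C c) * P (n+1) - Polynomial.C b * Polynomial.X * P n)
    (N : ℕ) :
    ∑ n ∈ Finset.range (N+1), coeff N ((Tser b c)^n) * Lam b c (P n)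
      = if N = 0 then 1 else 0 := by
  have hco := congrArg (fun W => Lam b c (PowerSeries.coeff N W))
    (hZY b c P hP0 hP1 hP)
  simp only [Zmk, Ymk, PowerSeries.coeff_mk, PowerSeries.coeff_mul, PowerSeries.coeff_map] at hco
  rw [Lam_sum, Lam_sum] at hco
  have hL : ∀ n ∈ Finset.range (N+1),
      Lam b c ((coeff N ((Tser b c)^n)) • P n) = coeff N ((Tser b c)^n) * Lam b c (P n) :=
    fun n _ => Lam_smul b c _ _
  rw [Finset.sum_congr rfl hL] at hco
  have hR : ∀ p ∈ Finset.HasAntidiagonal.antidiagonal N,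
      Lam b c ((Polynomial.X : Polynomial ℝ)^p.1 * Polynomial.C (coeff p.2 (Gser b c)))
      = coeff p.1 (Fser b c) * coeff p.2 (Gser b c) := by
    intro p _
    rw [mul_comm, Polynomial.C_mul_X_pow_eq_monomial, Lam_monomial]
    rw [nuF]
    ring
  rw [Finset.sum_congr rfl hR] at hco
  rw [← PowerSeries.coeff_mul, hFG, PowerSeries.coeff_one] at hco
  exact hco

lemma orth (b c : ℝ) (P : ℕ → Polynomial ℝ)
    (hP0 : P 0 = 1) (hP1 : P 1 = Polynomial.X - Polynomial.C c)
    (hP : ∀ n, P (n+2)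
      = (Polynomial.X - Polynomial.C c) * P (n+1) - Polynomial.C b * Polynomial.X * P n) :
    ∀ N, Lam b c (P N) = if N = 0 then 1 else 0 := by
  intro N
  induction N using Nat.strong_induction_on with
  | _ N ih =>
      have hk := keyN b c P hP0 hP1 hP N
      rw [Finset.sum_range_succ, coeff_T_pow_self] at hk
      have hz : ∑ n ∈ Finset.range N, coeff N ((Tser b c)^n) * Lam b c (P n) = 0 := by
        apply Finset.sum_eq_zero
        intro n hn
        have hn' := Finset.mem_range.mp hn
        rw [ih n hn']
        rcases Nat.eq_zero_or_pos n with rfl | hnpos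
        · rw [if_pos rfl, pow_zero, PowerSeries.coeff_one, if_neg (by omega)]
          ring
        · rw [if_neg (by omega)]
          ring
      rw [hz, zero_add, one_mul] at hk
      exact hk

lemma hdeg (b c : ℝ) (P : ℕ → Polynomial ℝ)
    (hP0 : P 0 = 1) (hP1 : P 1 = Polynomial.X - Polynomial.C c)
    (hP : ∀ n, P (n+2)
      = (Polynomial.X - Polynomial.C c) * P (n+1) - Polynomial.C b * Polynomial.X * P n) :
    ∀ n, (P n).natDegree ≤ n := by
  intro n
  induction n using Nat.strong_induction_on with
  | _ n ih =>
      match n with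
      | 0 => rw [hP0]; simp
      | 1 => rw [hP1]; rw [Polynomial.natDegree_X_sub_C]
      | n+2 =>
          rw [hP n]
          apply le_trans (Polynomial.natDegree_sub_le _ _)
          apply max_le
          · apply le_trans (Polynomial.natDegree_mul_le)
            have h1 : (Polynomial.X - Polynomial.C c : Polynomial ℝ).natDegree = 1 :=
              Polynomial.natDegree_X_sub_C c
            have := ih (n+1) (by omega)
            omega
          · apply le_trans (Polynomial.natDegree_mul_le)
            have h1 : (Polynomial.C b * Polynomial.X : Polynomial ℝ).natDegree ≤ 1 := by
              apply le_trans (Polynomial.natDegree_mul_le)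
              simp
            have := ih n (by omega)
            omega

lemma hlead (b c : ℝ) (P : ℕ → Polynomial ℝ)
    (hP0 : P 0 = 1) (hP1 : P 1 = Polynomial.X - Polynomial.C c)
    (hP : ∀ n, P (n+2)
      = (Polynomial.X - Polynomial.C c) * P (n+1) - Polynomial.C b * Polynomial.X * P n) :
    ∀ n, (P n).coeff n = 1 := by
  intro n
  induction n using Nat.strong_induction_on with
  | _ n ih =>
      match n with
      | 0 => rw [hP0]; simp
      | 1 => rw [hP1]; simp
      | n+2 =>
          rw [hP n, Polynomial.coeff_sub, sub_mul, Polynomial.coeff_sub,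
            Polynomial.coeff_X_mul, Polynomial.coeff_C_mul, mul_assoc,
            Polynomial.coeff_C_mul, Polynomial.coeff_X_mul]
          rw [ih (n+1) (by omega)]
          have hz1 : (P (n+1)).coeff (n+2) = 0 :=
            Polynomial.coeff_eq_zero_of_natDegree_lt
              (lt_of_le_of_lt (hdeg b c P hP0 hP1 hP (n+1)) (by omega))
          have hz2 : (P n).coeff (n+1) = 0 :=
            Polynomial.coeff_eq_zero_of_natDegree_lt
              (lt_of_le_of_lt (hdeg b c P hP0 hP1 hP n) (by omega))
          rw [hz1, hz2]
          ring

/-- For `n ≥ 1`, the `n`-th moment of the constant-coefficient Laurent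
biorthogonal polynomials satisfies
`μ_n = (c/n) ∑_{j=0}^{n-1} C(n,j) C(2n-j-2, n-j-1) c^j b^{n-j-1}`. -/
theorem lbp_moment_lagrange_form
    (b c : ℝ) (hb : b ≠ 0) (hc : c ≠ 0)
    (P : ℕ → Polynomial ℝ)
    (hP0 : P 0 = 1)
    (hP1 : P 1 = Polynomial.X - Polynomial.C c)
    (hP : ∀ n, 2 ≤ n →
      P n = (Polynomial.X - Polynomial.C c) * P (n - 1)
            - Polynomial.C b * Polynomial.X * P (n - 2))
    (μ : ℕ → ℝ)
    (hμ : ∀ n, (∑ k ∈ Finset.range (n + 1), (P n).coeff k * μ k) =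
      if n = 0 then 1 else 0) :
    ∀ n, 1 ≤ n →
      μ n = (c / (n : ℝ)) *
        ∑ j ∈ Finset.range n,
          (n.choose j : ℝ) * ((2 * n - j - 2).choose (n - j - 1) : ℝ) *
            c ^ j * b ^ (n - j - 1) := by
  have hP' : ∀ n, P (n+2)
      = (Polynomial.X - Polynomial.C c) * P (n+1) - Polynomial.C b * Polynomial.X * P n :=
    fun n => hP (n+2) (by omega)
  have huniq : ∀ k, μ k = nuF b c k := by
    intro k
    induction k using Nat.strong_induction_on with
    | _ k ih =>
        have horth := orth b c P hP0 hP1 hP' k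
        rw [Lam_range b c (P k) (k+1)
          (lt_of_le_of_lt (hdeg b c P hP0 hP1 hP' k) (by omega))] at horth
        have hsum := hμ k
        have hdiff : ∑ j ∈ Finset.range (k+1), (P k).coeff j * (μ j - nuF b c j) = 0 := by
          have hexp : ∑ j ∈ Finset.range (k+1), (P k).coeff j * (μ j - nuF b c j)
              = (∑ j ∈ Finset.range (k+1), (P k).coeff j * μ j)
                - ∑ j ∈ Finset.range (k+1), (P k).coeff j * nuF b c j := by
            rw [← Finset.sum_sub_distrib]
            apply Finset.sum_congr rfl
            intros; ring
          rw [hexp, hsum, horth]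
          ring
        rw [Finset.sum_range_succ, hlead b c P hP0 hP1 hP' k, one_mul] at hdiff
        have hz : ∑ j ∈ Finset.range k, (P k).coeff j * (μ j - nuF b c j) = 0 := by
          apply Finset.sum_eq_zero
          intro j hj
          rw [ih j (Finset.mem_range.mp hj)]
          ring
        rw [hz, zero_add] at hdiff
        linarith [hdiff]
  intro n hn
  obtain ⟨m, rfl⟩ : ∃ m, n = m+1 := ⟨n-1, by omega⟩
  have h1 : μ (m+1) = c * tauF b c (m+1) := by rw [huniq (m+1), nuF_pos]
  have h2 := tau_closed b c (m+1) (by omega)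
  have h3 := sum_form b c (m+1) (by omega)
  rw [h3] at h2
  have hn0 : ((m:ℝ)+1) ≠ 0 := by positivity
  rw [h1]
  push_cast at h2 ⊢
  rw [← h2]
  field_simp
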